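/- Let T>0, ν>0, d∈ℕ⁺, let f:[0,T]×ℝ^d×ℂ→ℂ be continuous, and let u∈C^{1,2}([0,T]×ℝ^d;ℂ) be a classical solution of i∂_t u(t,x) = (ν/2)Δu(t,x) + f(t,x,u(t,x)). Assume that for every t∈[0,T] the function x↦u(t,x) is a Schwartz function, and that there is a Lebesgue-integrable function h:ℝ^d→[0,∞) such that for all t∈[0,T] and x∈ℝ^d, |u(t,x)|² + |u(t,x)||∂_t u(t,x)| + |∇u(t,x)|² + |u(t,x)||Δu(t,x)| + |u(t,x)||f(t,x,u(t,x))| ≤ h(x). Then for every t∈[0,T]: ∫_{ℝ^d}|u^R(T,x)|²dx − ∫_{ℝ^d}|u^R(t,x)|²dx = −ν∫_t^T∫_{ℝ^d} ∇u^R(s,x)·∇u^I(s,x) dx ds + 2∫_t^T∫_{ℝ^d} u^R(s,x)·f^I(s,x,u(s,x)) dx ds. -/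

import Mathlib

open MeasureTheory Set
open scoped BigOperators

/-- Time derivative `∂_t u(t,x)`. -/
noncomputable def tderiv {d : ℕ} (u : ℝ → EuclideanSpace ℝ (Fin d) → ℂ)
    (t : ℝ) (x : EuclideanSpace ℝ (Fin d)) : ℂ :=
  deriv (fun s => u s x) t

/-- Spatial Laplacian of a complex-valued function on `ℝ^d`. -/
noncomputable def lapC {d : ℕ} (v : EuclideanSpace ℝ (Fin d) → ℂ)
    (x : EuclideanSpace ℝ (Fin d)) : ℂ :=
  ∑ j : Fin d, fderiv ℝ (fun y => fderiv ℝ v y (EuclideanSpace.single j 1)) x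
    (EuclideanSpace.single j 1)

/-- `u ∈ C^{1,2}` : `u` is continuous, with (jointly) continuous time derivative and
(jointly) continuous first and second spatial derivatives. -/
def IsC12 {d : ℕ} (u : ℝ → EuclideanSpace ℝ (Fin d) → ℂ) : Prop :=
  Continuous (fun p : ℝ × EuclideanSpace ℝ (Fin d) => u p.1 p.2) ∧
  (∀ x, Differentiable ℝ fun t => u t x) ∧
  Continuous (fun p : ℝ × EuclideanSpace ℝ (Fin d) => deriv (fun s => u s p.2) p.1) ∧
  (∀ t, ContDiff ℝ 2 (u t)) ∧
  Continuous (fun p : ℝ × EuclideanSpace ℝ (Fin d) => fderiv ℝ (u p.1) p.2) ∧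
  Continuous (fun p : ℝ × EuclideanSpace ℝ (Fin d) =>
    fderiv ℝ (fun y => fderiv ℝ (u p.1) y) p.2)

section Helpers

variable {d : ℕ}
local notation "E" => EuclideanSpace ℝ (Fin d)

noncomputable def Dj (j : Fin d) (φ : SchwartzMap E ℂ) : SchwartzMap E ℂ :=
  SchwartzMap.evalCLM ℝ E ℂ (EuclideanSpace.single j (1:ℝ)) (SchwartzMap.fderivCLM ℝ E ℂ φ)

lemma Dj_coe (j : Fin d) (φ : SchwartzMap E ℂ) :
    ⇑(Dj j φ) = fun y => fderiv ℝ φ y (EuclideanSpace.single j 1) := rfl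

lemma schwartz_bdd (φ : SchwartzMap E ℂ) : ∃ C, ∀ x, ‖φ x‖ ≤ C := by
  obtain ⟨C, -, hC⟩ := φ.decay 0 0
  exact ⟨C, fun x => by simpa using hC x⟩

-- chain rule with a real-CLM
lemma fderiv_clm_comp' {g : E → ℂ} {x : E} (hg : DifferentiableAt ℝ g x) (L : ℂ →L[ℝ] ℝ) (v : E) :
    fderiv ℝ (fun y => L (g y)) x v = L (fderiv ℝ g x v) := by
  have : fderiv ℝ (fun y => L (g y)) x = L.comp (fderiv ℝ g x) :=
    (L.hasFDerivAt.comp x hg.hasFDerivAt).fderiv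
  rw [this]; rfl

lemma fderiv_re' {g : E → ℂ} {x : E} (hg : DifferentiableAt ℝ g x) (v : E) :
    fderiv ℝ (fun y => (g y).re) x v = (fderiv ℝ g x v).re := by
  have h : HasFDerivAt (fun y => (g y).re) (Complex.reCLM.comp (fderiv ℝ g x)) x :=
    Complex.reCLM.hasFDerivAt.comp x hg.hasFDerivAt
  rw [h.fderiv]; rfl

lemma fderiv_im' {g : E → ℂ} {x : E} (hg : DifferentiableAt ℝ g x) (v : E) :
    fderiv ℝ (fun y => (g y).im) x v = (fderiv ℝ g x v).im := by
  have h : HasFDerivAt (fun y => (g y).im) (Complex.imCLM.comp (fderiv ℝ g x)) x :=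
    Complex.imCLM.hasFDerivAt.comp x hg.hasFDerivAt
  rw [h.fderiv]; rfl

lemma grad_inner_eq (w₁ w₂ : E → ℝ) (x : E) :
    (inner ℝ (gradient w₁ x) (gradient w₂ x) : ℝ)
      = ∑ j, fderiv ℝ w₁ x (EuclideanSpace.single j 1) * fderiv ℝ w₂ x (EuclideanSpace.single j 1) := by
  have key : ∀ (w : E → ℝ) (j : Fin d), gradient w x j = fderiv ℝ w x (EuclideanSpace.single j 1) := by
    intro w j
    have : (inner ℝ (gradient w x) (EuclideanSpace.single j (1:ℝ)) : ℝ)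
        = fderiv ℝ w x (EuclideanSpace.single j 1) := by
      rw [gradient]; exact InnerProductSpace.toDual_symm_apply
    rw [EuclideanSpace.inner_single_right] at this
    simpa only [one_mul, conj_trivial] using this
  rw [PiLp.inner_apply]
  refine Finset.sum_congr rfl fun j _ => ?_
  rw [key, key, Real.inner_apply]

lemma schwartz_mul_integrable (ψ χ : SchwartzMap E ℂ) (L₁ L₂ : ℂ →L[ℝ] ℝ) :
    Integrable (fun x => L₁ (ψ x) * L₂ (χ x)) := by
  obtain ⟨C, hC⟩ := schwartz_bdd ψ
  refine Integrable.bdd_mul (c := ‖L₁‖ * C) ?_ ?_ (ae_of_all _ fun x => ?_)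
  · exact (χ.integrable.norm.const_mul ‖L₂‖).mono'
      ((L₂.continuous.comp χ.continuous).aestronglyMeasurable)
      (Filter.Eventually.of_forall fun x => by simpa using L₂.le_opNorm (χ x))
  · exact (L₁.continuous.comp ψ.continuous).aestronglyMeasurable
  · exact (L₁.le_opNorm (ψ x)).trans (mul_le_mul_of_nonneg_left (hC x) (norm_nonneg _))

lemma ibp (φ : SchwartzMap E ℂ) :
    ∫ x, (φ x).re * (lapC (⇑φ) x).im
      = - ∫ x, (inner ℝ (gradient (fun y => (φ y).re) x) (gradient (fun y => (φ y).im) x) : ℝ) := by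
  set e : Fin d → E := fun j => EuclideanSpace.single j 1 with he
  have hφd : Differentiable ℝ ⇑φ := φ.differentiable
  -- per-j pieces
  have keyj : ∀ j : Fin d,
      ∫ x, (φ x).re * ((Dj j (Dj j φ)) x).im = - ∫ x, ((Dj j φ) x).re * ((Dj j φ) x).im := by
    intro j
    have hP : Differentiable ℝ (fun y => (φ y).re) :=
      Complex.reCLM.differentiable.comp hφd
    have hg : Differentiable ℝ (fun y => ((Dj j φ) y).im) :=
      Complex.imCLM.differentiable.comp (Dj j φ).differentiable
    have h1 : Integrable (fun x => fderiv ℝ (fun y => (φ y).re) x (e j) * ((Dj j φ) x).im) := by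
      have heq : (fun x => fderiv ℝ (fun y => (φ y).re) x (e j) * ((Dj j φ) x).im)
          = fun x => Complex.reCLM ((Dj j φ) x) * Complex.imCLM ((Dj j φ) x) := by
        funext x
        rw [fderiv_re' (hφd x)]
        rfl
      rw [heq]
      exact schwartz_mul_integrable _ _ _ _
    have h2 : Integrable (fun x => (φ x).re * fderiv ℝ (fun y => ((Dj j φ) y).im) x (e j)) := by
      have heq : (fun x => (φ x).re * fderiv ℝ (fun y => ((Dj j φ) y).im) x (e j))
          = fun x => Complex.reCLM (φ x) * Complex.imCLM ((Dj j (Dj j φ)) x) := by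
        funext x
        rw [fderiv_im' ((Dj j φ).differentiable x)]
        rfl
      rw [heq]
      exact schwartz_mul_integrable _ _ _ _
    have h3 : Integrable (fun x => (φ x).re * ((Dj j φ) x).im) :=
      schwartz_mul_integrable φ (Dj j φ) Complex.reCLM Complex.imCLM
    have := integral_mul_fderiv_eq_neg_fderiv_mul_of_integrable
      (μ := volume) (f := fun y => (φ y).re) (g := fun y => ((Dj j φ) y).im) (v := e j)
      h1 h2 h3 (fun x _ => hP x) (fun x _ => hg x)
    -- rewrite both sides
    calc ∫ x, (φ x).re * ((Dj j (Dj j φ)) x).im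
        = ∫ x, (φ x).re * fderiv ℝ (fun y => ((Dj j φ) y).im) x (e j) := by
          congr 1; funext x
          rw [fderiv_im' ((Dj j φ).differentiable x)]; rfl
      _ = - ∫ x, fderiv ℝ (fun y => (φ y).re) x (e j) * ((Dj j φ) x).im := this
      _ = - ∫ x, ((Dj j φ) x).re * ((Dj j φ) x).im := by
          congr 2; funext x
          rw [fderiv_re' (hφd x)]; rfl
  -- assemble
  have lapim : ∀ x, (φ x).re * (lapC (⇑φ) x).im = ∑ j, (φ x).re * ((Dj j (Dj j φ)) x).im := by
    intro x
    rw [lapC, Complex.im_sum, Finset.mul_sum]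
    rfl
  have inner_eq : ∀ x, (inner ℝ (gradient (fun y => (φ y).re) x) (gradient (fun y => (φ y).im) x) : ℝ)
      = ∑ j, ((Dj j φ) x).re * ((Dj j φ) x).im := by
    intro x
    rw [grad_inner_eq]
    refine Finset.sum_congr rfl fun j _ => ?_
    rw [fderiv_re' (hφd x), fderiv_im' (hφd x)]
    rfl
  have int_j : ∀ j : Fin d, Integrable (fun x => (φ x).re * ((Dj j (Dj j φ)) x).im) :=
    fun j => schwartz_mul_integrable φ (Dj j (Dj j φ)) Complex.reCLM Complex.imCLM
  have int_j' : ∀ j : Fin d, Integrable (fun x => ((Dj j φ) x).re * ((Dj j φ) x).im) :=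
    fun j => schwartz_mul_integrable (Dj j φ) (Dj j φ) Complex.reCLM Complex.imCLM
  calc ∫ x, (φ x).re * (lapC (⇑φ) x).im
      = ∫ x, ∑ j, (φ x).re * ((Dj j (Dj j φ)) x).im := by simp_rw [lapim]
    _ = ∑ j, ∫ x, (φ x).re * ((Dj j (Dj j φ)) x).im :=
        integral_finset_sum _ (fun j _ => int_j j)
    _ = ∑ j, - ∫ x, ((Dj j φ) x).re * ((Dj j φ) x).im := by
        exact Finset.sum_congr rfl fun j _ => keyj j
    _ = - ∑ j, ∫ x, ((Dj j φ) x).re * ((Dj j φ) x).im := by rw [Finset.sum_neg_distrib]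
    _ = - ∫ x, ∑ j, ((Dj j φ) x).re * ((Dj j φ) x).im := by
        rw [integral_finset_sum _ (fun j _ => int_j' j)]
    _ = - ∫ x, (inner ℝ (gradient (fun y => (φ y).re) x) (gradient (fun y => (φ y).im) x) : ℝ) := by
        simp_rw [inner_eq]

lemma fderiv_fderiv_apply {v : EuclideanSpace ℝ (Fin d) → ℂ} (hv : ContDiff ℝ 2 v)
    (x w z : E) :
    fderiv ℝ (fun y => fderiv ℝ v y w) x z = fderiv ℝ (fderiv ℝ v) x z w := by
  have hd : DifferentiableAt ℝ (fderiv ℝ v) x := by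
    have h1 : ContDiff ℝ 1 (fderiv ℝ v) := hv.fderiv_right (by norm_num)
    exact (h1.differentiable (by norm_num)) x
  have h := ((ContinuousLinearMap.apply ℝ ℂ w).hasFDerivAt.comp x hd.hasFDerivAt).fderiv
  have heq : (fun y => fderiv ℝ v y w) = (⇑(ContinuousLinearMap.apply ℝ ℂ w) ∘ fderiv ℝ v) := rfl
  rw [heq, h]; rfl

lemma lapC_eq {v : EuclideanSpace ℝ (Fin d) → ℂ} (hv : ContDiff ℝ 2 v) (x : E) :
    lapC v x = ∑ j, fderiv ℝ (fderiv ℝ v) x (EuclideanSpace.single j 1)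
      (EuclideanSpace.single j 1) := by
  rw [lapC]
  exact Finset.sum_congr rfl fun j _ => fderiv_fderiv_apply hv x _ _

lemma grad_re_eq {v : E → ℂ} {x : E} (hv : DifferentiableAt ℝ v x) :
    gradient (fun y => (v y).re) x
      = (InnerProductSpace.toDual ℝ E).symm (Complex.reCLM.comp (fderiv ℝ v x)) := by
  show (InnerProductSpace.toDual ℝ E).symm (fderiv ℝ (fun y => (v y).re) x) = _
  congr 1
  exact (Complex.reCLM.hasFDerivAt.comp x hv.hasFDerivAt).fderiv

lemma grad_im_eq {v : E → ℂ} {x : E} (hv : DifferentiableAt ℝ v x) :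
    gradient (fun y => (v y).im) x
      = (InnerProductSpace.toDual ℝ E).symm (Complex.imCLM.comp (fderiv ℝ v x)) := by
  show (InnerProductSpace.toDual ℝ E).symm (fderiv ℝ (fun y => (v y).im) x) = _
  congr 1
  exact (Complex.imCLM.hasFDerivAt.comp x hv.hasFDerivAt).fderiv

lemma comp_norm_le (L : ℂ →L[ℝ] ℝ) (hL : ∀ z : ℂ, ‖L z‖ ≤ ‖z‖) (M : E →L[ℝ] ℂ) :
    ‖L.comp M‖ ≤ ‖M‖ := by
  refine ContinuousLinearMap.opNorm_le_bound _ (norm_nonneg M) fun v => ?_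
  calc ‖L (M v)‖ ≤ ‖M v‖ := hL (M v)
    _ ≤ ‖M‖ * ‖v‖ := M.le_opNorm v

lemma grad_re_norm_le {v : E → ℂ} {x : E} (hv : DifferentiableAt ℝ v x) :
    ‖gradient (fun y => (v y).re) x‖ ≤ ‖fderiv ℝ v x‖ := by
  rw [grad_re_eq hv, LinearIsometryEquiv.norm_map]
  exact comp_norm_le _ (fun z => by simpa using Complex.abs_re_le_norm z) _

lemma grad_im_norm_le {v : E → ℂ} {x : E} (hv : DifferentiableAt ℝ v x) :
    ‖gradient (fun y => (v y).im) x‖ ≤ ‖fderiv ℝ v x‖ := by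
  rw [grad_im_eq hv, LinearIsometryEquiv.norm_map]
  exact comp_norm_le _ (fun z => by simpa using Complex.abs_im_le_norm z) _

section Main
open Metric intervalIntegral

theorem stmt8' (T ν : ℝ) (hT : 0 < T) (hν : 0 < ν) {d : ℕ} (hd : 0 < d)
    (f : ℝ → EuclideanSpace ℝ (Fin d) → ℂ → ℂ)
    (hf : Continuous fun p : ℝ × EuclideanSpace ℝ (Fin d) × ℂ => f p.1 p.2.1 p.2.2)
    (u : ℝ → EuclideanSpace ℝ (Fin d) → ℂ)
    (hu1 : Continuous (fun p : ℝ × EuclideanSpace ℝ (Fin d) => u p.1 p.2))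
    (hu2 : ∀ x, Differentiable ℝ fun t => u t x)
    (hu3 : Continuous (fun p : ℝ × EuclideanSpace ℝ (Fin d) => deriv (fun s => u s p.2) p.1))
    (hu4 : ∀ t, ContDiff ℝ 2 (u t))
    (hu5 : Continuous (fun p : ℝ × EuclideanSpace ℝ (Fin d) => fderiv ℝ (u p.1) p.2))
    (hu6 : Continuous (fun p : ℝ × EuclideanSpace ℝ (Fin d) =>
      fderiv ℝ (fun y => fderiv ℝ (u p.1) y) p.2))
    (hpde : ∀ t ∈ Icc (0:ℝ) T, ∀ x,
      Complex.I * tderiv u t x = (ν / 2 : ℂ) * lapC (u t) x + f t x (u t x))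
    (hSchwartz : ∀ t ∈ Icc (0:ℝ) T,
      ∃ φ : SchwartzMap (EuclideanSpace ℝ (Fin d)) ℂ, ∀ x, u t x = φ x)
    (h : EuclideanSpace ℝ (Fin d) → ℝ) (hh0 : ∀ x, 0 ≤ h x) (hhint : Integrable h)
    (hbound : ∀ t ∈ Icc (0:ℝ) T, ∀ x,
      ‖u t x‖^2 + ‖u t x‖ * ‖tderiv u t x‖ + ‖fderiv ℝ (u t) x‖^2
        + ‖u t x‖ * ‖lapC (u t) x‖ + ‖u t x‖ * ‖f t x (u t x)‖ ≤ h x) :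
    ∀ t ∈ Icc (0:ℝ) T,
      (∫ x, ((u T x).re)^2) - (∫ x, ((u t x).re)^2)
        = -ν * (∫ s in t..T, ∫ x,
            (inner ℝ (gradient (fun y => (u s y).re) x)
              (gradient (fun y => (u s y).im) x) : ℝ))
          + 2 * (∫ s in t..T, ∫ x, (u s x).re * (f s x (u s x)).im) := by
  intro t ht
  have htT : t ≤ T := ht.2
  set A : ℝ → ℝ := fun s => ∫ x,
      (inner ℝ (gradient (fun y => (u s y).re) x) (gradient (fun y => (u s y).im) x) : ℝ) with hA
  set B : ℝ → ℝ := fun s => ∫ x, (u s x).re * (f s x (u s x)).im with hB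
  -- basic continuity in x for fixed s
  have hcu : ∀ s : ℝ, Continuous (u s) := fun s => (hu4 s).continuous
  have hctd : ∀ s : ℝ, Continuous fun x => tderiv u s x := fun s =>
    hu3.comp (Continuous.prodMk_right s)
  have hcfd : ∀ s : ℝ, Continuous fun x => fderiv ℝ (u s) x := fun s =>
    hu5.comp (Continuous.prodMk_right s)
  have hdiffu : ∀ s : ℝ, Differentiable ℝ (u s) := fun s =>
    (hu4 s).differentiable (by norm_num)
  have hclap : ∀ s : ℝ, Continuous fun x => (lapC (u s) x) := by
    intro s
    have heq : (fun x => lapC (u s) x)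
        = fun x => ∑ j, fderiv ℝ (fderiv ℝ (u s)) x (EuclideanSpace.single j 1)
            (EuclideanSpace.single j 1) := funext fun x => lapC_eq (hu4 s) x
    rw [heq]
    refine continuous_finset_sum _ fun j _ => ?_
    have h2 : Continuous fun x => fderiv ℝ (fderiv ℝ (u s)) x :=
      hu6.comp (Continuous.prodMk_right s)
    exact (h2.clm_apply continuous_const).clm_apply continuous_const
  have hcf : ∀ s : ℝ, Continuous fun x => f s x (u s x) := fun s =>
    hf.comp (continuous_const.prodMk (continuous_id.prodMk (hcu s)))
  -- gradient rewrite
  have hgradre : ∀ s : ℝ, (fun x => gradient (fun y => (u s y).re) x)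
      = fun x => (InnerProductSpace.toDual ℝ (EuclideanSpace ℝ (Fin d))).symm
          (Complex.reCLM.comp (fderiv ℝ (u s) x)) :=
    fun s => funext fun x => grad_re_eq (hdiffu s x)
  have hgradim : ∀ s : ℝ, (fun x => gradient (fun y => (u s y).im) x)
      = fun x => (InnerProductSpace.toDual ℝ (EuclideanSpace ℝ (Fin d))).symm
          (Complex.imCLM.comp (fderiv ℝ (u s) x)) :=
    fun s => funext fun x => grad_im_eq (hdiffu s x)
  -- bounds
  have b1 : ∀ s ∈ Icc (0:ℝ) T, ∀ x, ‖u s x‖^2 ≤ h x := by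
    intro s hs x
    have H := hbound s hs x
    nlinarith [norm_nonneg (u s x), norm_nonneg (tderiv u s x), norm_nonneg (fderiv ℝ (u s) x),
      norm_nonneg (lapC (u s) x), norm_nonneg (f s x (u s x)),
      mul_nonneg (norm_nonneg (u s x)) (norm_nonneg (tderiv u s x)),
      mul_nonneg (norm_nonneg (u s x)) (norm_nonneg (lapC (u s) x)),
      mul_nonneg (norm_nonneg (u s x)) (norm_nonneg (f s x (u s x))),
      sq_nonneg ‖fderiv ℝ (u s) x‖]
  have b2 : ∀ s ∈ Icc (0:ℝ) T, ∀ x, ‖u s x‖ * ‖tderiv u s x‖ ≤ h x := by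
    intro s hs x
    have H := hbound s hs x
    nlinarith [sq_nonneg ‖u s x‖, sq_nonneg ‖fderiv ℝ (u s) x‖,
      mul_nonneg (norm_nonneg (u s x)) (norm_nonneg (lapC (u s) x)),
      mul_nonneg (norm_nonneg (u s x)) (norm_nonneg (f s x (u s x)))]
  have b3 : ∀ s ∈ Icc (0:ℝ) T, ∀ x, ‖fderiv ℝ (u s) x‖^2 ≤ h x := by
    intro s hs x
    have H := hbound s hs x
    nlinarith [sq_nonneg ‖u s x‖,
      mul_nonneg (norm_nonneg (u s x)) (norm_nonneg (tderiv u s x)),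
      mul_nonneg (norm_nonneg (u s x)) (norm_nonneg (lapC (u s) x)),
      mul_nonneg (norm_nonneg (u s x)) (norm_nonneg (f s x (u s x)))]
  have b4 : ∀ s ∈ Icc (0:ℝ) T, ∀ x, ‖u s x‖ * ‖lapC (u s) x‖ ≤ h x := by
    intro s hs x
    have H := hbound s hs x
    nlinarith [sq_nonneg ‖u s x‖, sq_nonneg ‖fderiv ℝ (u s) x‖,
      mul_nonneg (norm_nonneg (u s x)) (norm_nonneg (tderiv u s x)),
      mul_nonneg (norm_nonneg (u s x)) (norm_nonneg (f s x (u s x)))]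
  have b5 : ∀ s ∈ Icc (0:ℝ) T, ∀ x, ‖u s x‖ * ‖f s x (u s x)‖ ≤ h x := by
    intro s hs x
    have H := hbound s hs x
    nlinarith [sq_nonneg ‖u s x‖, sq_nonneg ‖fderiv ℝ (u s) x‖,
      mul_nonneg (norm_nonneg (u s x)) (norm_nonneg (tderiv u s x)),
      mul_nonneg (norm_nonneg (u s x)) (norm_nonneg (lapC (u s) x))]
  -- pointwise norm bounds on the integrands
  have nbF : ∀ s ∈ Icc (0:ℝ) T, ∀ x, ‖((u s x).re)^2‖ ≤ h x := by
    intro s hs x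
    have h1 : |(u s x).re| ≤ ‖u s x‖ := by
      simpa using Complex.abs_re_le_norm (u s x)
    calc ‖((u s x).re)^2‖ = |(u s x).re|^2 := by
          rw [Real.norm_eq_abs, abs_pow]
      _ ≤ ‖u s x‖^2 := by gcongr
      _ ≤ h x := b1 s hs x
  have nbF' : ∀ s ∈ Icc (0:ℝ) T, ∀ x,
      ‖2*((u s x).re)*((tderiv u s x).re)‖ ≤ 2 * h x := by
    intro s hs x
    have h1 : |(u s x).re| ≤ ‖u s x‖ := by simpa using Complex.abs_re_le_norm (u s x)
    have h2 : |(tderiv u s x).re| ≤ ‖tderiv u s x‖ := by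
      simpa using Complex.abs_re_le_norm (tderiv u s x)
    calc ‖2*((u s x).re)*((tderiv u s x).re)‖
        = 2 * (|(u s x).re| * |(tderiv u s x).re|) := by
          rw [Real.norm_eq_abs, abs_mul, abs_mul]; simp [mul_assoc]
      _ ≤ 2 * h x := by
          nlinarith [b2 s hs x, abs_nonneg (u s x).re, abs_nonneg (tderiv u s x).re,
            norm_nonneg (u s x), norm_nonneg (tderiv u s x)]
  have nbA : ∀ s ∈ Icc (0:ℝ) T, ∀ x,
      ‖(inner ℝ (gradient (fun y => (u s y).re) x) (gradient (fun y => (u s y).im) x) : ℝ)‖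
        ≤ h x := by
    intro s hs x
    have h1 := grad_re_norm_le (hdiffu s x)
    have h2 := grad_im_norm_le (hdiffu s x)
    calc ‖(inner ℝ (gradient (fun y => (u s y).re) x) (gradient (fun y => (u s y).im) x) : ℝ)‖
        ≤ ‖gradient (fun y => (u s y).re) x‖ * ‖gradient (fun y => (u s y).im) x‖ :=
          norm_inner_le_norm _ _
      _ ≤ ‖fderiv ℝ (u s) x‖ * ‖fderiv ℝ (u s) x‖ :=
          mul_le_mul h1 h2 (norm_nonneg _) (norm_nonneg _)
      _ = ‖fderiv ℝ (u s) x‖^2 := (sq ‖fderiv ℝ (u s) x‖).symm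
      _ ≤ h x := b3 s hs x
  have nbB : ∀ s ∈ Icc (0:ℝ) T, ∀ x, ‖(u s x).re * (f s x (u s x)).im‖ ≤ h x := by
    intro s hs x
    have h1 : |(u s x).re| ≤ ‖u s x‖ := by simpa using Complex.abs_re_le_norm (u s x)
    have h2 : |(f s x (u s x)).im| ≤ ‖f s x (u s x)‖ := by
      simpa using Complex.abs_im_le_norm (f s x (u s x))
    calc ‖(u s x).re * (f s x (u s x)).im‖ = |(u s x).re| * |(f s x (u s x)).im| := by
          rw [Real.norm_eq_abs, abs_mul]
      _ ≤ ‖u s x‖ * ‖f s x (u s x)‖ := mul_le_mul h1 h2 (abs_nonneg _) (norm_nonneg _)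
      _ ≤ h x := b5 s hs x
  have nbLap : ∀ s ∈ Icc (0:ℝ) T, ∀ x, ‖(u s x).re * (lapC (u s) x).im‖ ≤ h x := by
    intro s hs x
    have h1 : |(u s x).re| ≤ ‖u s x‖ := by simpa using Complex.abs_re_le_norm (u s x)
    have h2 : |(lapC (u s) x).im| ≤ ‖lapC (u s) x‖ := by
      simpa using Complex.abs_im_le_norm (lapC (u s) x)
    calc ‖(u s x).re * (lapC (u s) x).im‖ = |(u s x).re| * |(lapC (u s) x).im| := by
          rw [Real.norm_eq_abs, abs_mul]
      _ ≤ ‖u s x‖ * ‖lapC (u s) x‖ := mul_le_mul h1 h2 (abs_nonneg _) (norm_nonneg _)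
      _ ≤ h x := b4 s hs x
  -- integrability at fixed s
  have intF : ∀ s ∈ Icc (0:ℝ) T, Integrable (fun x => ((u s x).re)^2) := fun s hs =>
    hhint.mono' ((Complex.continuous_re.comp (hcu s)).pow 2).aestronglyMeasurable
      (ae_of_all _ (nbF s hs))
  have intF' : ∀ s ∈ Icc (0:ℝ) T, Integrable (fun x => 2*((u s x).re)*((tderiv u s x).re)) :=
    fun s hs => (hhint.const_mul 2).mono'
      (((continuous_const.mul (Complex.continuous_re.comp (hcu s))).mul
        (Complex.continuous_re.comp (hctd s))).aestronglyMeasurable)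
      (ae_of_all _ (nbF' s hs))
  have hcA : ∀ s : ℝ, Continuous fun x =>
      (inner ℝ (gradient (fun y => (u s y).re) x) (gradient (fun y => (u s y).im) x) : ℝ) := by
    intro s
    have c1 : Continuous fun x => gradient (fun y => (u s y).re) x := by
      rw [hgradre s]
      exact (InnerProductSpace.toDual ℝ _).symm.continuous.comp
        (continuous_const.clm_comp (hcfd s))
    have c2 : Continuous fun x => gradient (fun y => (u s y).im) x := by
      rw [hgradim s]
      exact (InnerProductSpace.toDual ℝ _).symm.continuous.comp
        (continuous_const.clm_comp (hcfd s))
    exact c1.inner c2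
  have intA : ∀ s ∈ Icc (0:ℝ) T, Integrable (fun x =>
      (inner ℝ (gradient (fun y => (u s y).re) x) (gradient (fun y => (u s y).im) x) : ℝ)) :=
    fun s hs => hhint.mono' (hcA s).aestronglyMeasurable (ae_of_all _ (nbA s hs))
  have intB : ∀ s ∈ Icc (0:ℝ) T, Integrable (fun x => (u s x).re * (f s x (u s x)).im) :=
    fun s hs => hhint.mono'
      ((Complex.continuous_re.comp (hcu s)).mul
        (Complex.continuous_im.comp (hcf s))).aestronglyMeasurable
      (ae_of_all _ (nbB s hs))
  have intLap : ∀ s ∈ Icc (0:ℝ) T, Integrable (fun x => (u s x).re * (lapC (u s) x).im) :=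
    fun s hs => hhint.mono'
      ((Complex.continuous_re.comp (hcu s)).mul
        (Complex.continuous_im.comp (hclap s))).aestronglyMeasurable
      (ae_of_all _ (nbLap s hs))
  -- key pointwise-in-time identity via PDE and integration by parts
  have hkey : ∀ s ∈ Icc (0:ℝ) T,
      (∫ x, 2*((u s x).re)*((tderiv u s x).re)) = -ν * A s + 2 * B s := by
    intro s hs
    obtain ⟨φ, hφ⟩ := hSchwartz s hs
    have hus : u s = ⇑φ := funext hφ
    have hre : ∀ x, (tderiv u s x).re = ν/2 * (lapC (u s) x).im + (f s x (u s x)).im := by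
      intro x
      have h1 := hpde s hs x
      have h2 : (Complex.I * tderiv u s x).im = (tderiv u s x).re := by
        simp [Complex.mul_im]
      rw [h1] at h2
      rw [← h2, Complex.add_im]
      have h3 : ((ν : ℂ)/2) = ((ν/2 : ℝ) : ℂ) := by push_cast; ring
      rw [h3]
      simp [Complex.mul_im]
    have hptw : ∀ x, 2*((u s x).re)*((tderiv u s x).re)
        = ν * ((u s x).re * (lapC (u s) x).im) + 2 * ((u s x).re * (f s x (u s x)).im) := by
      intro x; rw [hre x]; ring
    have hibp : (∫ x, (u s x).re * (lapC (u s) x).im) = - A s := by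
      show (∫ x, (u s x).re * (lapC (u s) x).im)
        = - ∫ x, (inner ℝ (gradient (fun y => (u s y).re) x)
            (gradient (fun y => (u s y).im) x) : ℝ)
      rw [hus]
      exact ibp φ
    calc (∫ x, 2*((u s x).re)*((tderiv u s x).re))
        = ∫ x, (ν * ((u s x).re * (lapC (u s) x).im)
            + 2 * ((u s x).re * (f s x (u s x)).im)) := by
          congr 1; funext x; exact hptw x
      _ = ν * (∫ x, (u s x).re * (lapC (u s) x).im)
            + 2 * (∫ x, (u s x).re * (f s x (u s x)).im) := by
          rw [MeasureTheory.integral_add ((intLap s hs).const_mul ν) ((intB s hs).const_mul 2),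
            MeasureTheory.integral_const_mul, MeasureTheory.integral_const_mul]
      _ = -ν * A s + 2 * B s := by
          rw [hibp]
          show ν * (- A s) + 2 * B s = -ν * A s + 2 * B s
          ring
  -- continuity in time of the three space integrals
  have hFcontOn : ContinuousOn (fun s => ∫ x, ((u s x).re)^2) (Icc (0:ℝ) T) := by
    rw [continuousOn_iff_continuous_restrict]
    show Continuous fun p : Icc (0:ℝ) T => ∫ x, ((u ↑p x).re)^2
    refine continuous_of_dominated
      (fun p => ((Complex.continuous_re.comp (hcu ↑p)).pow 2).aestronglyMeasurable)
      (fun p => ae_of_all _ (nbF ↑p p.2)) hhint (ae_of_all _ fun x => ?_)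
    exact ((Complex.continuous_re.comp
      (hu1.comp (continuous_subtype_val.prodMk continuous_const))).pow 2)
  have hAcontOn : ContinuousOn A (Icc (0:ℝ) T) := by
    rw [continuousOn_iff_continuous_restrict]
    show Continuous fun p : Icc (0:ℝ) T => ∫ x,
      (inner ℝ (gradient (fun y => (u ↑p y).re) x) (gradient (fun y => (u ↑p y).im) x) : ℝ)
    refine continuous_of_dominated (fun p => (hcA ↑p).aestronglyMeasurable)
      (fun p => ae_of_all _ (nbA ↑p p.2)) hhint (ae_of_all _ fun x => ?_)
    have cfd : Continuous fun p : Icc (0:ℝ) T => fderiv ℝ (u ↑p) x :=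
      hu5.comp (continuous_subtype_val.prodMk continuous_const)
    have c1 : Continuous fun p : Icc (0:ℝ) T => gradient (fun y => (u ↑p y).re) x := by
      have e1 : (fun p : Icc (0:ℝ) T => gradient (fun y => (u ↑p y).re) x)
          = fun p : Icc (0:ℝ) T => (InnerProductSpace.toDual ℝ _).symm
              (Complex.reCLM.comp (fderiv ℝ (u ↑p) x)) :=
        funext fun p => grad_re_eq (hdiffu ↑p x)
      rw [e1]
      exact (InnerProductSpace.toDual ℝ _).symm.continuous.comp
        (continuous_const.clm_comp cfd)
    have c2 : Continuous fun p : Icc (0:ℝ) T => gradient (fun y => (u ↑p y).im) x := by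
      have e1 : (fun p : Icc (0:ℝ) T => gradient (fun y => (u ↑p y).im) x)
          = fun p : Icc (0:ℝ) T => (InnerProductSpace.toDual ℝ _).symm
              (Complex.imCLM.comp (fderiv ℝ (u ↑p) x)) :=
        funext fun p => grad_im_eq (hdiffu ↑p x)
      rw [e1]
      exact (InnerProductSpace.toDual ℝ _).symm.continuous.comp
        (continuous_const.clm_comp cfd)
    exact c1.inner c2
  have hBcontOn : ContinuousOn B (Icc (0:ℝ) T) := by
    rw [continuousOn_iff_continuous_restrict]
    show Continuous fun p : Icc (0:ℝ) T => ∫ x, (u ↑p x).re * (f ↑p x (u ↑p x)).im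
    refine continuous_of_dominated
      (fun p => ((Complex.continuous_re.comp (hcu ↑p)).mul
        (Complex.continuous_im.comp (hcf ↑p))).aestronglyMeasurable)
      (fun p => ae_of_all _ (nbB ↑p p.2)) hhint (ae_of_all _ fun x => ?_)
    have cu : Continuous fun p : Icc (0:ℝ) T => u ↑p x :=
      hu1.comp (continuous_subtype_val.prodMk continuous_const)
    have cf : Continuous fun p : Icc (0:ℝ) T => f ↑p x (u ↑p x) :=
      hf.comp (continuous_subtype_val.prodMk (continuous_const.prodMk cu))
    exact (Complex.continuous_re.comp cu).mul (Complex.continuous_im.comp cf)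
  -- differentiation under the integral sign
  have hderiv : ∀ s ∈ Ioo t T,
      HasDerivAt (fun σ => ∫ x, ((u σ x).re)^2) (-ν * A s + 2 * B s) s := by
    intro s hs
    have hs0 : 0 < s := lt_of_le_of_lt ht.1 hs.1
    have hsIcc : s ∈ Icc (0:ℝ) T := ⟨le_of_lt hs0, le_of_lt hs.2⟩
    have hε0 : 0 < min s (T - s) := lt_min hs0 (by linarith [hs.2])
    have hball : ∀ σ ∈ Metric.ball s (min s (T-s)), σ ∈ Icc (0:ℝ) T := by
      intro σ hσ
      rw [Metric.mem_ball, Real.dist_eq] at hσ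
      have h1 := abs_lt.mp hσ
      have h2 := min_le_left s (T - s)
      have h3 := min_le_right s (T - s)
      constructor <;> linarith [h1.1, h1.2]
    have hdd : ∀ (x : EuclideanSpace ℝ (Fin d)) (σ : ℝ),
        HasDerivAt (fun σ' => ((u σ' x).re)^2)
          (2*((u σ x).re)*((tderiv u σ x).re)) σ := by
      intro x σ
      have hd0 : HasDerivAt (fun σ' => u σ' x) (tderiv u σ x) σ := (hu2 x σ).hasDerivAt
      have hre0 : HasDerivAt (fun σ' => (u σ' x).re) ((tderiv u σ x).re) σ :=
        Complex.reCLM.hasFDerivAt.comp_hasDerivAt σ hd0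
      have := hre0.fun_pow 2
      refine this.congr_deriv ?_
      rw [show (2:ℕ) - 1 = 1 from rfl]
      push_cast
      ring
    have main := (hasDerivAt_integral_of_dominated_loc_of_deriv_le (Metric.ball_mem_nhds s hε0)
      (F := fun σ x => ((u σ x).re)^2)
      (F' := fun σ x => 2*((u σ x).re)*((tderiv u σ x).re))
      (bound := fun x => 2 * h x)
      (Filter.Eventually.of_forall fun σ =>
        ((Complex.continuous_re.comp (hcu σ)).pow 2).aestronglyMeasurable)
      (intF s hsIcc)
      (((continuous_const.mul (Complex.continuous_re.comp (hcu s))).mul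
        (Complex.continuous_re.comp (hctd s))).aestronglyMeasurable)
      (ae_of_all _ fun x σ hσ => nbF' σ (hball σ hσ) x)
      (hhint.const_mul 2)
      (ae_of_all _ fun x σ _ => hdd x σ)).2
    rw [hkey s hsIcc] at main
    exact main
  -- fundamental theorem of calculus
  have hsub : Icc t T ⊆ Icc (0:ℝ) T := Icc_subset_Icc ht.1 le_rfl
  have hgint : IntervalIntegrable (fun s => -ν * A s + 2 * B s) volume t T := by
    apply ContinuousOn.intervalIntegrable
    rw [uIcc_of_le htT]
    exact (continuousOn_const.mul (hAcontOn.mono hsub)).add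
      (continuousOn_const.mul (hBcontOn.mono hsub))
  have hAint : IntervalIntegrable A volume t T := by
    apply ContinuousOn.intervalIntegrable
    rw [uIcc_of_le htT]
    exact hAcontOn.mono hsub
  have hBint : IntervalIntegrable B volume t T := by
    apply ContinuousOn.intervalIntegrable
    rw [uIcc_of_le htT]
    exact hBcontOn.mono hsub
  have hFTC := intervalIntegral.integral_eq_sub_of_hasDeriv_right_of_le htT
    (hFcontOn.mono hsub)
    (fun s hs => (hderiv s hs).hasDerivWithinAt)
    hgint
  rw [intervalIntegral.integral_add (hAint.const_mul (-ν)) (hBint.const_mul 2),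
    intervalIntegral.integral_const_mul, intervalIntegral.integral_const_mul] at hFTC
  exact hFTC.symm

end Main

/-- Energy identity for the real part of a classical solution of the backward nonlinear
Schrödinger equation. -/
theorem stmt8 (T ν : ℝ) (hT : 0 < T) (hν : 0 < ν) (d : ℕ) (hd : 0 < d)
    (f : ℝ → EuclideanSpace ℝ (Fin d) → ℂ → ℂ)
    (hf : Continuous fun p : ℝ × EuclideanSpace ℝ (Fin d) × ℂ => f p.1 p.2.1 p.2.2)
    (u : ℝ → EuclideanSpace ℝ (Fin d) → ℂ) (hu : IsC12 u)
    (hpde : ∀ t ∈ Icc (0:ℝ) T, ∀ x,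
      Complex.I * tderiv u t x = (ν / 2 : ℂ) * lapC (u t) x + f t x (u t x))
    (hSchwartz : ∀ t ∈ Icc (0:ℝ) T,
      ∃ φ : SchwartzMap (EuclideanSpace ℝ (Fin d)) ℂ, ∀ x, u t x = φ x)
    (h : EuclideanSpace ℝ (Fin d) → ℝ) (hh0 : ∀ x, 0 ≤ h x) (hhint : Integrable h)
    (hbound : ∀ t ∈ Icc (0:ℝ) T, ∀ x,
      ‖u t x‖^2 + ‖u t x‖ * ‖tderiv u t x‖ + ‖fderiv ℝ (u t) x‖^2
        + ‖u t x‖ * ‖lapC (u t) x‖ + ‖u t x‖ * ‖f t x (u t x)‖ ≤ h x) :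
    ∀ t ∈ Icc (0:ℝ) T,
      (∫ x, ((u T x).re)^2) - (∫ x, ((u t x).re)^2)
        = -ν * (∫ s in t..T, ∫ x,
            (inner ℝ (gradient (fun y => (u s y).re) x)
              (gradient (fun y => (u s y).im) x) : ℝ))
          + 2 * (∫ s in t..T, ∫ x, (u s x).re * (f s x (u s x)).im) := by
  obtain ⟨hu1, hu2, hu3, hu4, hu5, hu6⟩ := hu
  exact stmt8' T ν hT hν hd f hf u hu1 hu2 hu3 hu4 hu5 hu6 hpde hSchwartz h hh0 hhint hbound
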